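/- Let F be a finite field and consider a non-singular N-periodic linear system x(k+1) = A(k)x(k) over F^n. Define the subspace 𝒜 = ⋂_{0 ≤ i < j ≤ N-1} ker(A(i) − A(j)). If a periodic solution x(k) of period T contains at least one point not in 𝒜, then gcd(T, N) ≠ 1. -/
import Mathlib


open Matrix

theorem pfss_orbit_outside_A_gcd_ne_one
    (F : Type*) [Field F] [Fintype F] (n N : ℕ) (hN : 0 < N)
    (A : ℕ → Matrix (Fin n) (Fin n) F)
    (hper : ∀ k, A (k + N) = A k)
    (hns : ∀ k, IsUnit (A k))
    (x : ℕ → (Fin n → F)) (hx : ∀ k, x (k + 1) = (A k) *ᵥ x k)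
    (T : ℕ) (hT : 0 < T) (hTper : ∀ k, x (k + T) = x k)
    (hTmin : ∀ T' > 0, (∀ k, x (k + T') = x k) → T ≤ T')
    (hout : ∃ k0, ¬ (∀ i j, i < j → j < N → (A i - A j) *ᵥ x k0 = 0)) :
    Nat.gcd T N ≠ 1 := by
  intro hgcd
  obtain ⟨k0, hk0⟩ := hout
  apply hk0
  -- A is N-periodic in the mod sense
  have hAmul : ∀ m a, A (a + N * m) = A a := by
    intro m
    induction m with
    | zero => simp
    | succ m ih =>
      intro a
      have : a + N * (m + 1) = (a + N * m) + N := by ring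
      rw [this, hper, ih]
  have hAmod : ∀ a, A a = A (a % N) := by
    intro a
    conv_lhs => rw [← Nat.mod_add_div a N]
    exact hAmul _ _
  have hAeq : ∀ a b, a ≡ b [MOD N] → A a = A b := by
    intro a b hab
    rw [hAmod a, hAmod b, hab]
  -- x is m*T periodic
  have hxT : ∀ m k, x (k + m * T) = x k := by
    intro m
    induction m with
    | zero => simp
    | succ m ih =>
      intro k
      have : k + (m + 1) * T = (k + m * T) + T := by ring
      rw [this, hTper, ih]
  have hcop : Nat.Coprime T N := hgcd
  haveI : NeZero N := ⟨hN.ne'⟩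
  -- key: for all i, A i *ᵥ x k0 = A k0 *ᵥ x k0
  have key : ∀ i : ℕ, A i *ᵥ x k0 = A k0 *ᵥ x k0 := by
    intro i
    set u : (ZMod N)ˣ := ZMod.unitOfCoprime T hcop with hu
    set z : ZMod N := ((i : ZMod N) - (k0 : ZMod N)) * ((u⁻¹ : (ZMod N)ˣ) : ZMod N) with hz
    set m : ℕ := z.val with hm
    have hmz : (m : ZMod N) = z := by simp [hm, ZMod.natCast_val, ZMod.cast_id]
    have hcast : ((k0 + m * T : ℕ) : ZMod N) = (i : ZMod N) := by
      push_cast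
      rw [hmz, hz]
      have hT' : ((u : (ZMod N)ˣ) : ZMod N) = (T : ZMod N) := ZMod.coe_unitOfCoprime T hcop
      rw [← hT']
      have : ((u⁻¹ : (ZMod N)ˣ) : ZMod N) * ((u : (ZMod N)ˣ) : ZMod N) = 1 := by
        rw [← Units.val_mul]; simp
      rw [mul_assoc, this, mul_one]
      ring
    have hmod : (k0 + m * T) ≡ i [MOD N] := (ZMod.natCast_eq_natCast_iff _ _ _).mp hcast
    have hAi : A i = A (k0 + m * T) := (hAeq _ _ hmod).symm
    have h1 : x (k0 + m * T + 1) = A (k0 + m * T) *ᵥ x k0 := by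
      rw [hx, hxT]
    have h2 : x (k0 + m * T + 1) = A k0 *ᵥ x k0 := by
      have : k0 + m * T + 1 = (k0 + 1) + m * T := by ring
      rw [this, hxT, hx]
    rw [hAi, ← h1, h2]
  intro i j _ hj
  rw [sub_mulVec, key i, key j, sub_self]
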